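/- Let Σ be a compact metric space, T : Σ → ℝ continuous and strictly positive, and suppose the closed convex cone P̂ of a Kelvin-Planck theory contains every pair (0,q) with q a finite signed Borel measure satisfying ∫(1/T) dq = 0. Then any continuous strictly positive T' : Σ → ℝ such that ∫(1/T') dq ≤ 0 for all (0,q) ∈ P̂ is a positive scalar multiple of T. -/

import Mathlib

open MeasureTheory

/-- Integral of a real function against a finite signed Borel measure, via the
Jordan decomposition. -/
noncomputable def sintegral {Ω : Type*} [MeasurableSpace Ω]
    (μ : SignedMeasure Ω) (f : Ω → ℝ) : ℝ :=
  (∫ x, f x ∂μ.toJordanDecomposition.posPart) - ∫ x, f x ∂μ.toJordanDecomposition.negPart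

/-- The weak-* topology on signed measures. -/
noncomputable instance signedMeasureWeakStar {Ω : Type*} [TopologicalSpace Ω]
    [MeasurableSpace Ω] : TopologicalSpace (SignedMeasure Ω) :=
  TopologicalSpace.induced (fun μ => fun g : C(Ω, ℝ) => sintegral μ g) Pi.topologicalSpace

/-- If the closed convex cone `P̂` of a Kelvin-Planck theory contains every cyclic
element `(0, q)` with `∫(1/T) dq = 0`, then any Clausius-Duhem temperature scale `T'`
for the theory is a positive scalar multiple of `T`. -/


lemma cont_integrable {Ω : Type*} [MetricSpace Ω] [CompactSpace Ω] [MeasurableSpace Ω]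
    [BorelSpace Ω] (μ : Measure Ω) [IsFiniteMeasure μ] {f : Ω → ℝ} (hf : Continuous f) :
    Integrable f μ := by
  rw [← integrableOn_univ]
  exact hf.continuousOn.integrableOn_compact isCompact_univ

lemma sintegral_toSignedMeasure_sub {Ω : Type*} [MetricSpace Ω] [CompactSpace Ω]
    [MeasurableSpace Ω] [BorelSpace Ω] (a b : Measure Ω) [IsFiniteMeasure a]
    [IsFiniteMeasure b] {f : Ω → ℝ} (hf : Continuous f) :
    sintegral (a.toSignedMeasure - b.toSignedMeasure) f = (∫ x, f x ∂a) - ∫ x, f x ∂b := by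
  set q := a.toSignedMeasure - b.toSignedMeasure with hq
  have key : q.toJordanDecomposition.posPart + b = a + q.toJordanDecomposition.negPart := by
    ext s hs
    have h1 := q.toSignedMeasure_toJordanDecomposition
    have h2 := congrArg (fun m : SignedMeasure Ω => m s) h1
    simp only [JordanDecomposition.toSignedMeasure, VectorMeasure.sub_apply,
      Measure.toSignedMeasure_apply_measurable hs, hq] at h2
    have hpos : q.toJordanDecomposition.posPart s ≠ ⊤ := measure_ne_top _ _
    have hneg : q.toJordanDecomposition.negPart s ≠ ⊤ := measure_ne_top _ _
    have ha : a s ≠ ⊤ := measure_ne_top _ _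
    have hb : b s ≠ ⊤ := measure_ne_top _ _
    simp only [Measure.add_apply]
    rw [← ENNReal.toReal_eq_toReal_iff' (by finiteness) (by finiteness)]
    rw [ENNReal.toReal_add hpos hb, ENNReal.toReal_add ha hneg]
    simp only [← hq, Measure.real] at h2
    linarith
  have hint : ∀ (μ : Measure Ω), IsFiniteMeasure μ → Integrable f μ := fun μ h => by
    haveI := h; exact cont_integrable μ hf
  have := congrArg (fun μ : Measure Ω => ∫ x, f x ∂μ) key
  simp only [integral_add_measure (hint _ inferInstance) (hint _ inferInstance)] at this
  unfold sintegral
  linarith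


theorem full_reversible_cyclic_supply_forces_temperature_uniqueness
    {Ω : Type*} [MetricSpace Ω] [CompactSpace Ω] [MeasurableSpace Ω] [BorelSpace Ω]
    (Phat : Set (SignedMeasure Ω × SignedMeasure Ω))
    (hclosed : IsClosed Phat) (hconv : Convex ℝ Phat)
    (hcone : ∀ p ∈ Phat, ∀ α : ℝ, 0 < α → α • p ∈ Phat)
    (hKP : Phat ∩ {x : SignedMeasure Ω × SignedMeasure Ω | x.1 = 0 ∧
        ∃ (μ : Measure Ω) (h : IsFiniteMeasure μ),
          x.2 = @Measure.toSignedMeasure Ω _ μ h} = {(0, 0)})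
    (T : Ω → ℝ) (hT : Continuous T) (hTpos : ∀ x, 0 < T x)
    (hfull : ∀ q : SignedMeasure Ω, sintegral q (fun x => 1 / T x) = 0 →
      ((0 : SignedMeasure Ω), q) ∈ Phat)
    (T' : Ω → ℝ) (hT' : Continuous T') (hT'pos : ∀ x, 0 < T' x)
    (hT'CD : ∀ q : SignedMeasure Ω, ((0 : SignedMeasure Ω), q) ∈ Phat →
      sintegral q (fun x => 1 / T' x) ≤ 0) :
    ∃ l : ℝ, 0 < l ∧ ∀ x, T' x = l * T x := by
  cases isEmpty_or_nonempty Ω with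
  | inl h => exact ⟨1, one_pos, fun x => absurd trivial (h.elim x)⟩
  | inr h =>
    obtain ⟨σ₀⟩ := h
    refine ⟨T' σ₀ / T σ₀, div_pos (hT'pos σ₀) (hTpos σ₀), fun σ => ?_⟩
    -- measures
    set a : Measure Ω := ENNReal.ofReal (T σ) • Measure.dirac σ with ha
    set b : Measure Ω := ENNReal.ofReal (T σ₀) • Measure.dirac σ₀ with hb
    have hia : IsFiniteMeasure a := by
      constructor
      simp only [ha, Measure.smul_apply, smul_eq_mul]
      exact ENNReal.mul_lt_top ENNReal.ofReal_lt_top (by simp)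
    have hib : IsFiniteMeasure b := by
      constructor
      simp only [hb, Measure.smul_apply, smul_eq_mul]
      exact ENNReal.mul_lt_top ENNReal.ofReal_lt_top (by simp)
    have hintd : ∀ (c : ℝ) (x : Ω) (f : Ω → ℝ), Measurable f → 0 ≤ c →
        ∫ y, f y ∂(ENNReal.ofReal c • Measure.dirac x) = c * f x := by
      intro c x f hfm hc
      rw [integral_smul_measure, integral_dirac' f x hfm.stronglyMeasurable]
      simp [ENNReal.toReal_ofReal hc]
    have hTm : Measurable (fun x => 1 / T x) := (hT.measurable).const_div 1
    have hT'm : Measurable (fun x => 1 / T' x) := (hT'.measurable).const_div 1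
    have hsq : ∀ f : Ω → ℝ, Continuous f →
        sintegral (a.toSignedMeasure - b.toSignedMeasure) f = T σ * f σ - T σ₀ * f σ₀ := by
      intro f hf
      rw [sintegral_toSignedMeasure_sub a b hf]
      simp only [ha, hb, hintd _ _ _ hf.measurable (hTpos σ).le, hintd _ _ _ hf.measurable (hTpos σ₀).le]
    have hsq' : ∀ f : Ω → ℝ, Continuous f →
        sintegral (b.toSignedMeasure - a.toSignedMeasure) f = T σ₀ * f σ₀ - T σ * f σ := by
      intro f hf
      rw [sintegral_toSignedMeasure_sub b a hf]
      simp only [ha, hb, hintd _ _ _ hf.measurable (hTpos σ).le, hintd _ _ _ hf.measurable (hTpos σ₀).le]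
    have hcT : Continuous fun x => 1 / T x :=
      continuous_const.div hT (fun x => (hTpos x).ne')
    have hcT' : Continuous fun x => 1 / T' x :=
      continuous_const.div hT' (fun x => (hT'pos x).ne')
    have h1 : ((0 : SignedMeasure Ω), a.toSignedMeasure - b.toSignedMeasure) ∈ Phat := by
      apply hfull
      rw [hsq _ hcT]
      rw [one_div, one_div, mul_inv_cancel₀ (hTpos σ).ne', mul_inv_cancel₀ (hTpos σ₀).ne', sub_self]
    have h2 : ((0 : SignedMeasure Ω), b.toSignedMeasure - a.toSignedMeasure) ∈ Phat := by
      apply hfull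
      rw [hsq' _ hcT]
      rw [one_div, one_div, mul_inv_cancel₀ (hTpos σ).ne', mul_inv_cancel₀ (hTpos σ₀).ne', sub_self]
    have e1 := hT'CD _ h1
    have e2 := hT'CD _ h2
    rw [hsq _ hcT'] at e1
    rw [hsq' _ hcT'] at e2
    have : T σ * (1 / T' σ) = T σ₀ * (1 / T' σ₀) := by linarith
    have hts := (hTpos σ).ne'
    have hts0 := (hTpos σ₀).ne'
    have ht's := (hT'pos σ).ne'
    have ht's0 := (hT'pos σ₀).ne'
    field_simp at this ⊢
    linarith [this]
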